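/- Let P ∈ ℝ^{N×N} and B ∈ ℝ^{N×M} be entrywise nonnegative with ∑_j P_{ij} + ∑_m B_{im} = 1 for every i, and suppose for every index i there exist r ≥ 0 and indices i = j_0, …, j_r with P_{j_t, j_{t+1}} > 0 for t < r and ∑_m B_{j_r, m} > 0. Then (I − P) is invertible, and the powers of the block matrix Υ = fromBlocks I 0 B P converge: Υ^k → fromBlocks I 0 ((I − P)^{-1}·B) 0 as k → ∞. -/

import Mathlib

open Filter

section Aux

variable {N : ℕ} {P : Matrix (Fin N) (Fin N) ℝ}

/-- row sum of `P^k` at row `i`. -/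
private def rs (P : Matrix (Fin N) (Fin N) ℝ) (k : ℕ) (i : Fin N) : ℝ :=
  ∑ j, (P ^ k) i j

private lemma pow_entry_nonneg (hP : ∀ i j, 0 ≤ P i j) (k : ℕ) (i j : Fin N) :
    0 ≤ (P ^ k) i j := by
  induction k generalizing i j with
  | zero =>
    rw [pow_zero, Matrix.one_apply]
    split <;> norm_num
  | succ k ih =>
    rw [pow_succ, Matrix.mul_apply]
    exact Finset.sum_nonneg fun l _ => mul_nonneg (ih i l) (hP l j)

private lemma rs_nonneg (hP : ∀ i j, 0 ≤ P i j) (k : ℕ) (i : Fin N) : 0 ≤ rs P k i :=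
  Finset.sum_nonneg fun j _ => pow_entry_nonneg hP k i j

private lemma rs_zero (i : Fin N) : rs P 0 i = 1 := by
  simp [rs, Matrix.one_apply]

private lemma rs_one (i : Fin N) : rs P 1 i = ∑ j, P i j := by
  simp [rs]

private lemma rs_add (a b : ℕ) (i : Fin N) :
    rs P (a + b) i = ∑ l, (P ^ a) i l * rs P b l := by
  unfold rs
  rw [pow_add]
  simp only [Matrix.mul_apply]
  rw [Finset.sum_comm]
  exact Finset.sum_congr rfl fun l _ => (Finset.mul_sum _ _ _).symm

private lemma rs_succ (k : ℕ) (i : Fin N) :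
    rs P (k + 1) i = ∑ l, P i l * rs P k l := by
  have := rs_add (P := P) 1 k i
  rw [Nat.add_comm 1 k] at this
  simpa using this

private lemma rs_le_one (hP : ∀ i j, 0 ≤ P i j) (hrowP : ∀ i, ∑ j, P i j ≤ 1) :
    ∀ k i, rs P k i ≤ 1 := by
  intro k
  induction k with
  | zero => intro i; rw [rs_zero]
  | succ k ih =>
    intro i
    rw [rs_succ]
    calc ∑ l, P i l * rs P k l ≤ ∑ l, P i l * 1 :=
          Finset.sum_le_sum fun l _ => mul_le_mul_of_nonneg_left (ih l) (hP i l)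
      _ = ∑ l, P i l := by simp
      _ ≤ 1 := hrowP i

private lemma rs_anti (hP : ∀ i j, 0 ≤ P i j) (hrowP : ∀ i, ∑ j, P i j ≤ 1) (i : Fin N) :
    Antitone fun k => rs P k i := by
  have key : ∀ k i, rs P (k + 1) i ≤ rs P k i := by
    intro k
    induction k with
    | zero =>
      intro i
      rw [rs_one, rs_zero]
      exact hrowP i
    | succ k ih =>
      intro i
      rw [rs_succ (k + 1), rs_succ k]
      exact Finset.sum_le_sum fun l _ => mul_le_mul_of_nonneg_left (ih l) (hP i l)
  exact antitone_nat_of_succ_le fun k => key k i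

private lemma rs_lt_one_step (hP : ∀ i j, 0 ≤ P i j) (hrowP : ∀ i, ∑ j, P i j ≤ 1)
    {k : ℕ} {i j : Fin N} (hij : 0 < P i j) (hj : rs P k j < 1) :
    rs P (k + 1) i < 1 := by
  have h1 : ∑ l ∈ Finset.univ.erase j, P i l * rs P k l ≤ ∑ l ∈ Finset.univ.erase j, P i l :=
    Finset.sum_le_sum fun l _ =>
      mul_le_of_le_one_right (hP i l) (rs_le_one hP hrowP k l)
  have h2 : P i j * rs P k j < P i j := by nlinarith
  calc rs P (k + 1) i = ∑ l, P i l * rs P k l := rs_succ k i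
    _ = (∑ l ∈ Finset.univ.erase j, P i l * rs P k l) + P i j * rs P k j :=
        (Finset.sum_erase_add _ _ (Finset.mem_univ j)).symm
    _ < (∑ l ∈ Finset.univ.erase j, P i l) + P i j := add_lt_add_of_le_of_lt h1 h2
    _ = ∑ l, P i l := Finset.sum_erase_add _ _ (Finset.mem_univ j)
    _ ≤ 1 := hrowP i

private lemma rs_path (hP : ∀ i j, 0 ≤ P i j) (hrowP : ∀ i, ∑ j, P i j ≤ 1) :
    ∀ (r : ℕ) (jseq : ℕ → Fin N), (∀ t < r, 0 < P (jseq t) (jseq (t + 1))) →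
      rs P 1 (jseq r) < 1 → rs P (r + 1) (jseq 0) < 1 := by
  intro r
  induction r with
  | zero => intro jseq _ hlast; exact hlast
  | succ r ih =>
    intro jseq hpath hlast
    have h1 : rs P (r + 1) (jseq 1) < 1 :=
      ih (fun t => jseq (t + 1)) (fun t ht => hpath (t + 1) (by omega)) hlast
    exact rs_lt_one_step hP hrowP (hpath 0 (Nat.succ_pos r)) h1

end Aux

/-- Limit of the powers of the DILOC block matrix (Eq. (19)): under the absorbing
Markov chain condition, `I - P` is invertible and
`Υ^k → fromBlocks I 0 ((I - P)⁻¹ B) 0` as `k → ∞`. -/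
theorem fromBlocks_pow_limit {N M : ℕ}
    (P : Matrix (Fin N) (Fin N) ℝ) (B : Matrix (Fin N) (Fin M) ℝ)
    (hP : ∀ i j, 0 ≤ P i j) (hB : ∀ i m', 0 ≤ B i m')
    (hrow : ∀ i, ∑ j, P i j + ∑ m', B i m' = 1)
    (hconn : ∀ i : Fin N, ∃ (r : ℕ) (jseq : ℕ → Fin N), jseq 0 = i ∧
      (∀ t < r, 0 < P (jseq t) (jseq (t + 1))) ∧ 0 < ∑ m', B (jseq r) m') :
    IsUnit ((1 : Matrix (Fin N) (Fin N) ℝ) - P) ∧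
      Tendsto (fun k => (Matrix.fromBlocks (1 : Matrix (Fin M) (Fin M) ℝ) 0 B P) ^ k)
        atTop (nhds (Matrix.fromBlocks 1 0 (((1 : Matrix (Fin N) (Fin N) ℝ) - P)⁻¹ * B) 0)) := by
  have hrowP : ∀ i, ∑ j, P i j ≤ 1 := by
    intro i
    have h0 : 0 ≤ ∑ m', B i m' := Finset.sum_nonneg fun m' _ => hB i m'
    linarith [hrow i]
  -- for each i there is some power with a deficient row sum
  have hd : ∀ i, ∃ k, rs P k i < 1 := by
    intro i
    obtain ⟨r, jseq, h0, hpath, hlast⟩ := hconn i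
    refine ⟨r + 1, ?_⟩
    have hlast' : rs P 1 (jseq r) < 1 := by
      rw [rs_one]
      linarith [hrow (jseq r)]
    have := rs_path hP hrowP r jseq hpath hlast'
    rwa [h0] at this
  choose R hR using hd
  set K : ℕ := Finset.univ.sup R + 1 with hKdef
  have hK : 0 < K := Nat.succ_pos _
  have hKi : ∀ i, rs P K i < 1 := by
    intro i
    have hle : R i ≤ K := le_trans (Finset.le_sup (Finset.mem_univ i)) (Nat.le_succ _)
    exact lt_of_le_of_lt (rs_anti hP hrowP i hle) (hR i)
  -- a uniform bound c < 1
  obtain ⟨c, hc0, hc1, hcK⟩ : ∃ c : ℝ, 0 ≤ c ∧ c < 1 ∧ ∀ i, rs P K i ≤ c := by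
    rcases isEmpty_or_nonempty (Fin N) with h | h
    · exact ⟨0, le_refl _, one_pos, fun i => (h.false i).elim⟩
    · obtain ⟨i₀, -, hmax⟩ := Finset.exists_max_image Finset.univ (rs P K) Finset.univ_nonempty
      exact ⟨rs P K i₀, rs_nonneg hP K i₀, hKi i₀, fun i => hmax i (Finset.mem_univ i)⟩
  -- geometric decay of row sums
  have hmul : ∀ n i, rs P (n * K) i ≤ c ^ n := by
    intro n
    induction n with
    | zero => intro i; simp [rs_zero]
    | succ n ih =>
      intro i
      have heq : rs P (n * K + K) i = ∑ l, (P ^ (n * K)) i l * rs P K l := rs_add _ _ _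
      have h1 : rs P (n * K + K) i ≤ c * rs P (n * K) i := by
        rw [heq]
        calc ∑ l, (P ^ (n * K)) i l * rs P K l ≤ ∑ l, (P ^ (n * K)) i l * c :=
              Finset.sum_le_sum fun l _ =>
                mul_le_mul_of_nonneg_left (hcK l) (pow_entry_nonneg hP _ i l)
          _ = c * rs P (n * K) i := by rw [← Finset.sum_mul]; exact mul_comm _ _
      have h2 : c * rs P (n * K) i ≤ c * c ^ n := mul_le_mul_of_nonneg_left (ih i) hc0
      calc rs P ((n + 1) * K) i = rs P (n * K + K) i := by rw [Nat.succ_mul]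
        _ ≤ c * c ^ n := le_trans h1 h2
        _ = c ^ (n + 1) := (pow_succ' c n).symm
  have hsk : ∀ k i, rs P k i ≤ c ^ (k / K) := fun k i =>
    le_trans (rs_anti hP hrowP i (Nat.div_mul_le_self k K)) (hmul (k / K) i)
  have hentry : ∀ (k : ℕ) (i j : Fin N), (P ^ k) i j ≤ c ^ (k / K) := fun k i j =>
    le_trans (Finset.single_le_sum (fun l _ => pow_entry_nonneg hP k i l) (Finset.mem_univ j))
      (hsk k i)
  have hdiv : Tendsto (fun k : ℕ => k / K) atTop atTop :=
    tendsto_atTop_atTop.mpr fun b => ⟨b * K, fun k hk => (Nat.le_div_iff_mul_le hK).mpr hk⟩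
  have hgeo : Tendsto (fun k : ℕ => c ^ (k / K)) atTop (nhds 0) :=
    (tendsto_pow_atTop_nhds_zero_of_lt_one hc0 hc1).comp hdiv
  have hP0 : Tendsto (fun k => P ^ k) atTop (nhds (0 : Matrix (Fin N) (Fin N) ℝ)) := by
    apply tendsto_pi_nhds.mpr; intro i
    apply tendsto_pi_nhds.mpr; intro j
    simp only [Matrix.zero_apply]
    exact squeeze_zero (fun k => pow_entry_nonneg hP k i j) (fun k => hentry k i j) hgeo
  -- invertibility
  have hdet : IsUnit ((1 : Matrix (Fin N) (Fin N) ℝ) - P).det := by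
    rw [isUnit_iff_ne_zero]
    intro h
    obtain ⟨v, hv0, hv⟩ := (Matrix.exists_mulVec_eq_zero_iff).mpr h
    have hPv : P.mulVec v = v := by
      rw [Matrix.sub_mulVec, Matrix.one_mulVec, sub_eq_zero] at hv
      exact hv.symm
    have hpow : ∀ k, (P ^ k).mulVec v = v := by
      intro k
      induction k with
      | zero => simp [Matrix.one_mulVec]
      | succ k ih =>
        rw [pow_succ', ← Matrix.mulVec_mulVec, ih, hPv]
    obtain ⟨i₀, hi₀⟩ := Function.ne_iff.mp hv0
    have : Nonempty (Fin N) := ⟨i₀⟩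
    obtain ⟨i, -, hi⟩ := Finset.exists_max_image Finset.univ (fun i => |v i|) Finset.univ_nonempty
    have hvi : 0 < |v i| := by
      have h1 : |v i₀| ≤ |v i| := hi i₀ (Finset.mem_univ i₀)
      have h2 : 0 < |v i₀| := abs_pos.mpr (by simpa using hi₀)
      linarith
    have hKv : v i = ∑ j, (P ^ K) i j * v j := by
      have := congrFun (hpow K) i
      rw [Matrix.mulVec, dotProduct] at this
      exact this.symm
    have hb : |v i| ≤ c * |v i| := by
      calc |v i| = |∑ j, (P ^ K) i j * v j| := by rw [← hKv]
        _ ≤ ∑ j, |(P ^ K) i j * v j| := Finset.abs_sum_le_sum_abs _ _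
        _ = ∑ j, (P ^ K) i j * |v j| := by
            refine Finset.sum_congr rfl fun j _ => ?_
            rw [abs_mul, abs_of_nonneg (pow_entry_nonneg hP K i j)]
        _ ≤ ∑ j, (P ^ K) i j * |v i| :=
            Finset.sum_le_sum fun j _ =>
              mul_le_mul_of_nonneg_left (hi j (Finset.mem_univ j)) (pow_entry_nonneg hP K i j)
        _ = rs P K i * |v i| := by rw [rs, ← Finset.sum_mul]
        _ ≤ c * |v i| := mul_le_mul_of_nonneg_right (hcK i) (le_of_lt hvi)
    nlinarith
  have hUnit : IsUnit ((1 : Matrix (Fin N) (Fin N) ℝ) - P) :=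
    (Matrix.isUnit_iff_isUnit_det _).mpr hdet
  refine ⟨hUnit, ?_⟩
  -- geometric sum identity
  have hgs : ∀ k, (∑ t ∈ Finset.range k, P ^ t) =
      ((1 : Matrix (Fin N) (Fin N) ℝ) - P)⁻¹ * (1 - P ^ k) := by
    intro k
    have h1 : (1 - P) * (∑ t ∈ Finset.range k, P ^ t) = 1 - P ^ k := by
      have h := mul_geom_sum P k
      calc (1 - P) * (∑ t ∈ Finset.range k, P ^ t)
          = -((P - 1) * ∑ t ∈ Finset.range k, P ^ t) := by rw [← neg_sub P 1, neg_mul]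
        _ = -(P ^ k - 1) := by rw [h]
        _ = 1 - P ^ k := neg_sub _ _
    calc (∑ t ∈ Finset.range k, P ^ t)
        = ((1 - P)⁻¹ * (1 - P)) * (∑ t ∈ Finset.range k, P ^ t) := by
          rw [Matrix.nonsing_inv_mul _ hdet, one_mul]
      _ = (1 - P)⁻¹ * ((1 - P) * ∑ t ∈ Finset.range k, P ^ t) := by rw [mul_assoc]
      _ = (1 - P)⁻¹ * (1 - P ^ k) := by rw [h1]
  -- block power formula
  have hpowU : ∀ k, (Matrix.fromBlocks (1 : Matrix (Fin M) (Fin M) ℝ) 0 B P) ^ k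
      = Matrix.fromBlocks 1 0 ((∑ t ∈ Finset.range k, P ^ t) * B) (P ^ k) := by
    intro k
    induction k with
    | zero => simp [← Matrix.fromBlocks_one]
    | succ k ih =>
      rw [pow_succ, ih, Matrix.fromBlocks_multiply, Finset.sum_range_succ, Matrix.add_mul]
      simp [pow_succ]
  -- limit of the lower-left block
  have hC : Tendsto (fun k => (∑ t ∈ Finset.range k, P ^ t) * B) atTop
      (nhds (((1 : Matrix (Fin N) (Fin N) ℝ) - P)⁻¹ * B)) := by
    have hcont : Continuous fun X : Matrix (Fin N) (Fin N) ℝ =>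
        ((1 : Matrix (Fin N) (Fin N) ℝ) - P)⁻¹ * ((1 - X) * B) := by
      apply Continuous.matrix_mul continuous_const
      exact Continuous.matrix_mul (continuous_const.sub continuous_id) continuous_const
    have h := (hcont.tendsto 0).comp hP0
    simp only [Function.comp_def] at h
    have heq : (fun k => (∑ t ∈ Finset.range k, P ^ t) * B) =
        fun k => ((1 : Matrix (Fin N) (Fin N) ℝ) - P)⁻¹ * ((1 - P ^ k) * B) := by
      funext k; rw [hgs k, Matrix.mul_assoc]
    rw [heq]
    simpa using h
  -- conclude entrywise
  have hfun : (fun k => (Matrix.fromBlocks (1 : Matrix (Fin M) (Fin M) ℝ) 0 B P) ^ k) =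
      fun k => Matrix.fromBlocks 1 0 ((∑ t ∈ Finset.range k, P ^ t) * B) (P ^ k) :=
    funext hpowU
  rw [hfun]
  apply tendsto_pi_nhds.mpr; intro i
  apply tendsto_pi_nhds.mpr; intro j
  have hCe := fun i j => tendsto_pi_nhds.mp (tendsto_pi_nhds.mp hC i) j
  have hPe := fun i j => tendsto_pi_nhds.mp (tendsto_pi_nhds.mp hP0 i) j
  cases i with
  | inl i =>
    cases j with
    | inl j => simp [Matrix.fromBlocks]
    | inr j => simp [Matrix.fromBlocks]
  | inr i =>
    cases j with
    | inl j => simpa [Matrix.fromBlocks] using hCe i j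
    | inr j => simpa [Matrix.fromBlocks] using hPe i j
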